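/- arXiv:2304.14748 — 2 statements merged into one kernel-verified Lean document; each statement's English description precedes it below -/
import Mathlib

section
/- Let $c_2 > 1$ be the absolute constant for which $n^{\star}(\varepsilon, d; \Lambda^{\rm std}) \leq 2 c_1\, n^{\star}(\varepsilon/c_2, d; \Lambda^{\rm all})$ holds (for some absolute constant $c_1 \in \mathbb{N}$). Then the exponents of quasi-polynomial tractability of ${\rm APP} = \{{\rm APP}_{\infty,d}\}$ satisfy, for $\star \in \{{\rm ABS}, {\rm NOR}\}$: ${\rm EXP}\text{-}t^{\star}(\Lambda^{\rm all}) \leq {\rm EXP}\text{-}t^{\star}(\Lambda^{\rm std}) \leq (1 + \ln(\ln c_2 + 1))\, {\rm EXP}\text{-}t^{\star}(\Lambda^{\rm all})$ and ${\rm ALG}\text{-}t^{\star}(\Lambda^{\rm all}) \leq {\rm ALG}\text{-}t^{\star}(\Lambda^{\rm std}) \leq (1 + \ln c_2)\, {\rm ALG}\text{-}t^{\star}(\Lambda^{\rm all})$. -/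
open Filter
open scoped ENNReal NNReal

noncomputable section

/-- Coefficient space: `ℓ²` sequences indexed by `ℤ^d`.  An element `u` represents the
function `f ∈ H^ω(𝕋^d)` with Fourier coefficients `f̂(k) = u k / ω k`, so that
`‖u‖_{ℓ²} = ‖f‖_{H^ω}`. -/
abbrev Coef (d : ℕ) := lp (fun _ : Fin d → ℤ => ℂ) 2

/-- The periodic function represented by the coefficients `u`:
`f(x) = ∑_{k ∈ ℤ^d} (u k / ω k) e^{2πi k·x}`. -/
def torusFn {d : ℕ} (ω : (Fin d → ℤ) → ℝ) (u : Coef d) (x : Fin d → ℝ) : ℂ :=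
  ∑' k : Fin d → ℤ,
    ((ω k : ℂ))⁻¹ * u k * Complex.exp (2 * Real.pi * Complex.I * ∑ j, (k j : ℂ) * (x j : ℂ))

/-- The torus `𝕋^d`, modelled as the cube `[0,1]^d`. -/
def cube (d : ℕ) : Set (Fin d → ℝ) := {x | ∀ j, x j ∈ Set.Icc (0 : ℝ) 1}

/-- Standard information: point-evaluation functionals `f ↦ f(x)`. -/
def stdInfo {d : ℕ} (ω : (Fin d → ℤ) → ℝ) : Set (Coef d → ℂ) :=
  {L | ∃ x ∈ cube d, L = fun u => torusFn ω u x}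

/-- General linear information: all continuous linear functionals on `H^ω`. -/
def allInfo (d : ℕ) : Set (Coef d → ℂ) := {L | ∃ T : Coef d →L[ℂ] ℂ, L = ⇑T}

/-- The `n`-th minimal worst case error `e(n, APP_{∞,d}; Λ)` of `L_∞`-approximation on the
unit ball of `H^ω(𝕋^d)`, using algorithms `f ↦ φ(L₁ f, …, Lₙ f)` with `Lᵢ ∈ Λ`. -/
def wcErr {d : ℕ} (ω : (Fin d → ℤ) → ℝ) (Λ : Set (Coef d → ℂ)) (n : ℕ) : ℝ≥0∞ :=
  ⨅ (L : Fin n → Coef d → ℂ) (_ : ∀ i, L i ∈ Λ) (φ : (Fin n → ℂ) → (Fin d → ℝ) → ℂ),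
    ⨆ (u : Coef d) (_ : ‖u‖ ≤ 1) (x : Fin d → ℝ) (_ : x ∈ cube d),
      (‖torusFn ω u x - φ (fun i => L i u) x‖₊ : ℝ≥0∞)

/-- The initial error `e(0, APP_{∞,d}) = sup_{‖f‖_{H^ω} ≤ 1} ‖f‖_∞`. -/
def initErr {d : ℕ} (ω : (Fin d → ℤ) → ℝ) : ℝ≥0∞ :=
  ⨆ (u : Coef d) (_ : ‖u‖ ≤ 1) (x : Fin d → ℝ) (_ : x ∈ cube d),
    (‖torusFn ω u x‖₊ : ℝ≥0∞)

/-- The error criterion: absolute (ABS) or normalized (NOR). -/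
inductive Crit | ABS | NOR

/-- `CRI_d`: the normalizing quantity of the error criterion. -/
def CRI {d : ℕ} (ω : (Fin d → ℤ) → ℝ) : Crit → ℝ≥0∞
  | Crit.ABS => 1
  | Crit.NOR => initErr ω

/-- The information complexity `n^⋆(ε, d; Λ)`. -/
def infoComp {d : ℕ} (ω : (Fin d → ℤ) → ℝ) (Λ : Set (Coef d → ℂ)) (crit : Crit) (ε : ℝ) : ℕ :=
  sInf {n : ℕ | wcErr ω Λ n ≤ ENNReal.ofReal ε * CRI ω crit}

/-- Algebraic strong polynomial tractability of the family of information complexities `nc`. -/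
def ALGSPT (nc : ℕ → ℝ → ℕ) : Prop :=
  ∃ C > (0:ℝ), ∃ p ≥ (0:ℝ), ∀ d : ℕ, 0 < d → ∀ ε ∈ Set.Ioo (0:ℝ) 1,
    (nc d ε : ℝ) ≤ C * ε ^ (-p)

/-- The exponent of algebraic strong polynomial tractability. -/
def ALGSPTexp (nc : ℕ → ℝ → ℕ) : ℝ :=
  sInf {p : ℝ | 0 ≤ p ∧ ∃ C > (0:ℝ), ∀ d : ℕ, 0 < d → ∀ ε ∈ Set.Ioo (0:ℝ) 1,
    (nc d ε : ℝ) ≤ C * ε ^ (-p)}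

/-- Algebraic polynomial tractability. -/
def ALGPT (nc : ℕ → ℝ → ℕ) : Prop :=
  ∃ C > (0:ℝ), ∃ p ≥ (0:ℝ), ∃ q ≥ (0:ℝ), ∀ d : ℕ, 0 < d → ∀ ε ∈ Set.Ioo (0:ℝ) 1,
    (nc d ε : ℝ) ≤ C * (d : ℝ) ^ q * ε ^ (-p)

/-- Algebraic quasi-polynomial tractability. -/
def ALGQPT (nc : ℕ → ℝ → ℕ) : Prop :=
  ∃ C > (0:ℝ), ∃ t ≥ (0:ℝ), ∀ d : ℕ, 0 < d → ∀ ε ∈ Set.Ioo (0:ℝ) 1,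
    (nc d ε : ℝ) ≤ C * Real.exp (t * (1 + Real.log d) * (1 + Real.log ε⁻¹))

/-- The exponent of algebraic quasi-polynomial tractability. -/
def ALGQPTexp (nc : ℕ → ℝ → ℕ) : ℝ :=
  sInf {t : ℝ | 0 ≤ t ∧ ∃ C > (0:ℝ), ∀ d : ℕ, 0 < d → ∀ ε ∈ Set.Ioo (0:ℝ) 1,
    (nc d ε : ℝ) ≤ C * Real.exp (t * (1 + Real.log d) * (1 + Real.log ε⁻¹))}

/-- Exponential quasi-polynomial tractability. -/
def EXPQPT (nc : ℕ → ℝ → ℕ) : Prop :=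
  ∃ C > (0:ℝ), ∃ t ≥ (0:ℝ), ∀ d : ℕ, 0 < d → ∀ ε ∈ Set.Ioo (0:ℝ) 1,
    (nc d ε : ℝ) ≤ C * Real.exp (t * (1 + Real.log d) * (1 + Real.log (Real.log ε⁻¹ + 1)))

/-- The exponent of exponential quasi-polynomial tractability. -/
def EXPQPTexp (nc : ℕ → ℝ → ℕ) : ℝ :=
  sInf {t : ℝ | 0 ≤ t ∧ ∃ C > (0:ℝ), ∀ d : ℕ, 0 < d → ∀ ε ∈ Set.Ioo (0:ℝ) 1,
    (nc d ε : ℝ) ≤ C * Real.exp (t * (1 + Real.log d) * (1 + Real.log (Real.log ε⁻¹ + 1)))}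

/-- `lim_{ε⁻¹ + d → ∞} (log nc(d, ε)) / den(d, ε) = 0`. -/
def WTlim (den : ℕ → ℝ → ℝ) (nc : ℕ → ℝ → ℕ) : Prop :=
  ∀ δ > (0:ℝ), ∃ M : ℝ, ∀ d : ℕ, 0 < d → ∀ ε ∈ Set.Ioo (0:ℝ) 1,
    M ≤ ε⁻¹ + d → |Real.log (nc d ε) / den d ε| < δ

/-- Algebraic `(s,t)`-weak tractability; `ALGWTst 1 1` is algebraic weak tractability. -/
def ALGWTst (s t : ℝ) (nc : ℕ → ℝ → ℕ) : Prop :=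
  WTlim (fun d ε => ε ^ (-s) + (d : ℝ) ^ t) nc

/-- Algebraic uniform weak tractability. -/
def ALGUWT (nc : ℕ → ℝ → ℕ) : Prop := ∀ α > (0:ℝ), ∀ β > (0:ℝ), ALGWTst α β nc

/-- Exponential `(s,t)`-weak tractability; `EXPWTst 1 1` is exponential weak tractability. -/
def EXPWTst (s t : ℝ) (nc : ℕ → ℝ → ℕ) : Prop :=
  WTlim (fun d ε => (1 + Real.log ε⁻¹) ^ s + (d : ℝ) ^ t) nc

/-- Exponential uniform weak tractability. -/
def EXPUWT (nc : ℕ → ℝ → ℕ) : Prop := ∀ α > (0:ℝ), ∀ β > (0:ℝ), EXPWTst α β nc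

namespace Stmt8Aux

open scoped ComplexConjugate

variable {d : ℕ}

def ker (ω : (Fin d → ℤ) → ℝ) (x : Fin d → ℝ) (k : Fin d → ℤ) : ℂ :=
  ((ω k : ℂ))⁻¹ *
    Complex.exp (((-(2 * Real.pi * ∑ j, (k j : ℝ) * x j) : ℝ) : ℂ) * Complex.I)

lemma norm_ker (ω : (Fin d → ℤ) → ℝ) (hpos : ∀ k, 0 < ω k) (x : Fin d → ℝ) (k : Fin d → ℤ) :
    ‖ker ω x k‖ = (ω k)⁻¹ := by
  rw [ker, norm_mul, Complex.norm_exp_ofReal_mul_I, mul_one, norm_inv,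
    Complex.norm_real, Real.norm_eq_abs, abs_of_pos (hpos k)]

lemma memℓp_ker (ω : (Fin d → ℤ) → ℝ) (hpos : ∀ k, 0 < ω k)
    (hsum : Summable fun k => ((ω k) ^ 2)⁻¹) (x : Fin d → ℝ) : Memℓp (ker ω x) 2 := by
  apply memℓp_gen
  have h : (fun k : Fin d → ℤ => ‖ker ω x k‖ ^ (2 : ℝ≥0∞).toReal)
      = fun k => ((ω k) ^ 2)⁻¹ := by
    funext k
    rw [norm_ker ω hpos x k, show ((2:ℝ≥0∞)).toReal = ((2:ℕ):ℝ) by norm_num,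
      Real.rpow_natCast, inv_pow]
  rw [h]; exact hsum

def V (ω : (Fin d → ℤ) → ℝ) (hpos : ∀ k, 0 < ω k)
    (hsum : Summable fun k => ((ω k) ^ 2)⁻¹) (x : Fin d → ℝ) : Coef d :=
  ⟨ker ω x, memℓp_ker ω hpos hsum x⟩

lemma conj_ker_mul (ω : (Fin d → ℤ) → ℝ) (x : Fin d → ℝ) (k : Fin d → ℤ) (z : ℂ) :
    (starRingEnd ℂ) (ker ω x k) * z =
      ((ω k : ℂ))⁻¹ * z * Complex.exp (2 * Real.pi * Complex.I * ∑ j, (k j : ℂ) * (x j : ℂ)) := by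
  rw [ker, map_mul, map_inv₀, Complex.conj_ofReal, ← Complex.exp_conj]
  have h1 : (starRingEnd ℂ) ((((-(2 * Real.pi * ∑ j, (k j : ℝ) * x j)) : ℝ) : ℂ) * Complex.I)
      = 2 * Real.pi * Complex.I * ∑ j, (k j : ℂ) * (x j : ℂ) := by
    rw [map_mul, Complex.conj_ofReal, Complex.conj_I]
    push_cast
    ring
  rw [h1]; ring

lemma torusFn_eq_inner (ω : (Fin d → ℤ) → ℝ) (hpos : ∀ k, 0 < ω k)
    (hsum : Summable fun k => ((ω k) ^ 2)⁻¹) (u : Coef d) (x : Fin d → ℝ) :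
    torusFn ω u x = @inner ℂ _ _ (V ω hpos hsum x) u := by
  rw [lp.inner_eq_tsum (𝕜 := ℂ)]
  refine tsum_congr fun k => ?_
  rw [RCLike.inner_apply]
  exact (conj_ker_mul ω x k (u k)).symm.trans (mul_comm _ _)

def partialS (ω : (Fin d → ℤ) → ℝ) (hpos : ∀ k, 0 < ω k)
    (hsum : Summable fun k => ((ω k) ^ 2)⁻¹) (F : Finset (Fin d → ℤ)) (x : Fin d → ℝ) : Coef d :=
  ∑ k ∈ F, lp.single 2 k (V ω hpos hsum x k)

lemma norm_V_sub (ω : (Fin d → ℤ) → ℝ) (hpos : ∀ k, 0 < ω k)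
    (hsum : Summable fun k => ((ω k) ^ 2)⁻¹) (F : Finset (Fin d → ℤ)) (x : Fin d → ℝ) :
    ‖V ω hpos hsum x - partialS ω hpos hsum F x‖ ^ ((2:ℝ≥0∞)).toReal
      = (∑' k, ((ω k) ^ 2)⁻¹) - ∑ k ∈ F, ((ω k) ^ 2)⁻¹ := by
  have hp : 0 < ((2:ℝ≥0∞)).toReal := by norm_num
  have hterm : ∀ k, ‖(V ω hpos hsum x : ∀ _ : Fin d → ℤ, ℂ) k‖ ^ ((2:ℝ≥0∞)).toReal
      = ((ω k) ^ 2)⁻¹ := by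
    intro k
    have h : ‖(V ω hpos hsum x : ∀ _ : Fin d → ℤ, ℂ) k‖ = (ω k)⁻¹ := norm_ker ω hpos x k
    rw [h, show ((2:ℝ≥0∞)).toReal = ((2:ℕ):ℝ) by norm_num, Real.rpow_natCast, inv_pow]
  rw [partialS, lp.norm_compl_sum_single hp, lp.norm_rpow_eq_tsum hp,
    tsum_congr hterm, Finset.sum_congr rfl fun k _ => hterm k]

lemma continuous_ker (ω : (Fin d → ℤ) → ℝ) (k : Fin d → ℤ) :
    Continuous fun x : Fin d → ℝ => ker ω x k := by
  have h1 : Continuous fun x : Fin d → ℝ => ∑ j, (k j : ℝ) * x j :=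
    continuous_finset_sum _ fun j _ => continuous_const.mul (continuous_apply j)
  exact continuous_const.mul (Complex.continuous_exp.comp
    ((Complex.continuous_ofReal.comp ((continuous_const.mul h1).neg)).mul continuous_const))

lemma single_sub (k : Fin d → ℤ) (a b : ℂ) :
    (lp.single 2 k a : Coef d) - lp.single 2 k b = lp.single 2 k (a - b) := by
  apply lp.ext
  funext j
  by_cases h : j = k
  · subst h
    simp [lp.coeFn_sub, lp.single_apply_self]
  · simp [lp.coeFn_sub, lp.single_apply_ne _ _ _ h]

lemma norm_single_eq (k : Fin d → ℤ) (a : ℂ) : ‖(lp.single 2 k a : Coef d)‖ = ‖a‖ :=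
  lp.norm_single (p := 2) (E := fun _ : Fin d → ℤ => ℂ) (by norm_num) k a

lemma continuous_single (k : Fin d → ℤ) :
    Continuous fun z : ℂ => (lp.single 2 k z : Coef d) := by
  have hlip : LipschitzWith 1 fun z : ℂ => (lp.single 2 k z : Coef d) := by
    refine LipschitzWith.of_dist_le_mul fun a b => ?_
    rw [dist_eq_norm, dist_eq_norm, single_sub, NNReal.coe_one, one_mul, norm_single_eq]
  exact hlip.continuous

lemma continuous_partialS (ω : (Fin d → ℤ) → ℝ) (hpos : ∀ k, 0 < ω k)
    (hsum : Summable fun k => ((ω k) ^ 2)⁻¹) (F : Finset (Fin d → ℤ)) :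
    Continuous (partialS ω hpos hsum F) := by
  refine continuous_finset_sum _ fun k _ => ?_
  exact (continuous_single k).comp (continuous_ker ω k)

lemma tendstoUniformly_partialS (ω : (Fin d → ℤ) → ℝ) (hpos : ∀ k, 0 < ω k)
    (hsum : Summable fun k => ((ω k) ^ 2)⁻¹) :
    TendstoUniformly (partialS ω hpos hsum) (V ω hpos hsum) atTop := by
  rw [Metric.tendstoUniformly_iff]
  intro ε hε
  have hlt : (∑' k, ((ω k) ^ 2)⁻¹) - ε ^ 2 < ∑' k, ((ω k) ^ 2)⁻¹ := by
    have := pow_pos hε 2; linarith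
  filter_upwards [hsum.hasSum.eventually (eventually_gt_nhds hlt)] with F hF x
  rw [dist_eq_norm]
  have h2 := norm_V_sub ω hpos hsum F x
  rw [show ((2:ℝ≥0∞)).toReal = ((2:ℕ):ℝ) by norm_num, Real.rpow_natCast] at h2
  have hlt2 : ‖V ω hpos hsum x - partialS ω hpos hsum F x‖ ^ 2 < ε ^ 2 := by
    rw [h2]; linarith
  exact lt_of_pow_lt_pow_left₀ 2 hε.le hlt2

lemma continuous_V (ω : (Fin d → ℤ) → ℝ) (hpos : ∀ k, 0 < ω k)
    (hsum : Summable fun k => ((ω k) ^ 2)⁻¹) : Continuous (V ω hpos hsum) :=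
  (tendstoUniformly_partialS ω hpos hsum).continuous
    (Eventually.of_forall fun F => continuous_partialS ω hpos hsum F).frequently

lemma std_subset_all (ω : (Fin d → ℤ) → ℝ) (hpos : ∀ k, 0 < ω k)
    (hsum : Summable fun k => ((ω k) ^ 2)⁻¹) : stdInfo ω ⊆ allInfo d := by
  rintro L ⟨x, hx, rfl⟩
  exact ⟨innerSL ℂ (V ω hpos hsum x),
    funext fun u => (torusFn_eq_inner ω hpos hsum u x).trans rfl⟩

lemma wcErr_anti {Λ Λ' : Set (Coef d → ℂ)} (h : Λ ⊆ Λ') (ω : (Fin d → ℤ) → ℝ) (n : ℕ) :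
    wcErr ω Λ' n ≤ wcErr ω Λ n := by
  refine le_iInf fun L => le_iInf fun hL => le_iInf fun φ => ?_
  exact iInf_le_of_le L (iInf_le_of_le (fun i => h (hL i)) (iInf_le _ φ))

lemma zero_mem_cube : (fun _ => (0:ℝ)) ∈ cube d := fun _ => ⟨le_rfl, zero_le_one⟩

lemma isCompact_cube : IsCompact (cube d) := by
  have h : cube d = Set.pi Set.univ (fun _ : Fin d => Set.Icc (0:ℝ) 1) := by
    ext x
    simp only [cube, Set.mem_setOf_eq, Set.mem_pi, Set.mem_univ, true_implies]
  rw [h]; exact isCompact_univ_pi fun _ => isCompact_Icc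

lemma exists_wcErr_le (ω : (Fin d → ℤ) → ℝ) (hpos : ∀ k, 0 < ω k)
    (hsum : Summable fun k => ((ω k) ^ 2)⁻¹) {δ : ℝ} (hδ : 0 < δ) :
    ∃ n : ℕ, wcErr ω (stdInfo ω) n ≤ ENNReal.ofReal δ := by
  classical
  have hV : Continuous (V ω hpos hsum) := continuous_V ω hpos hsum
  obtain ⟨t, ht⟩ := isCompact_cube.elim_finite_subcover
      (fun y : ↥(cube d) => V ω hpos hsum ⁻¹' Metric.ball (V ω hpos hsum y) δ)
      (fun y => Metric.isOpen_ball.preimage hV)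
      (fun x hx => Set.mem_iUnion.2 ⟨⟨x, hx⟩,
        by simp only [Set.mem_preimage]; exact Metric.mem_ball_self hδ⟩)
  have htne : t.Nonempty := by
    rcases Set.mem_iUnion₂.1 (ht zero_mem_cube) with ⟨y, hy, -⟩
    exact ⟨y, hy⟩
  have hn : 0 < t.card := Finset.card_pos.2 htne
  set pt : Fin t.card → (Fin d → ℝ) := fun i => ((t.equivFin.symm i : ↥(cube d)) : Fin d → ℝ)
    with hpt
  have hptcube : ∀ i, pt i ∈ cube d := fun i => (t.equivFin.symm i : ↥(cube d)).2
  set ix : (Fin d → ℝ) → Fin t.card := fun x =>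
    if h : ∃ i, dist (V ω hpos hsum x) (V ω hpos hsum (pt i)) < δ then h.choose else ⟨0, hn⟩
    with hix
  refine ⟨t.card, ?_⟩
  refine iInf_le_of_le (fun i u => torusFn ω u (pt i)) ?_
  refine iInf_le_of_le (fun i => ⟨pt i, hptcube i, rfl⟩) ?_
  refine iInf_le_of_le (fun c x => c (ix x)) ?_
  refine iSup_le fun u => iSup_le fun hu => iSup_le fun x => iSup_le fun hx => ?_
  have hex : ∃ i, dist (V ω hpos hsum x) (V ω hpos hsum (pt i)) < δ := by
    rcases Set.mem_iUnion₂.1 (ht hx) with ⟨y, hy, hxy⟩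
    refine ⟨t.equivFin ⟨y, hy⟩, ?_⟩
    have hpe : pt (t.equivFin ⟨y, hy⟩) = (y : Fin d → ℝ) := by
      rw [hpt]; simp
    rw [hpe]
    exact hxy
  have hdist : dist (V ω hpos hsum x) (V ω hpos hsum (pt (ix x))) < δ := by
    rw [hix]; simp only [dif_pos hex]; exact hex.choose_spec
  have herr : ‖torusFn ω u x - torusFn ω u (pt (ix x))‖ ≤ δ := by
    rw [torusFn_eq_inner ω hpos hsum u x, torusFn_eq_inner ω hpos hsum u (pt (ix x)),
      ← inner_sub_left]
    calc ‖@inner ℂ _ _ (V ω hpos hsum x - V ω hpos hsum (pt (ix x))) u‖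
        ≤ ‖V ω hpos hsum x - V ω hpos hsum (pt (ix x))‖ * ‖u‖ := norm_inner_le_norm _ _
      _ ≤ δ * 1 := mul_le_mul (by rw [← dist_eq_norm]; exact hdist.le) hu (norm_nonneg _) hδ.le
      _ = δ := mul_one δ
  show (‖torusFn ω u x - torusFn ω u (pt (ix x))‖₊ : ℝ≥0∞) ≤ ENNReal.ofReal δ
  rw [← ENNReal.ofReal_coe_nnreal, coe_nnnorm]
  exact ENNReal.ofReal_le_ofReal herr

lemma initErr_pos (ω : (Fin d → ℤ) → ℝ) (hpos : ∀ k, 0 < ω k)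
    (hsum : Summable fun k => ((ω k) ^ 2)⁻¹) : 0 < initErr ω := by
  classical
  set u₀ : Coef d := lp.single 2 (0 : Fin d → ℤ) (1:ℂ) with hu₀
  have hu : ‖u₀‖ ≤ 1 := by rw [hu₀, norm_single_eq]; simp
  have hval : torusFn ω u₀ (fun _ => 0) = ((ω 0 : ℝ) : ℂ)⁻¹ := by
    rw [torusFn_eq_inner ω hpos hsum u₀ (fun _ => 0), hu₀, lp.inner_single_right,
      RCLike.inner_apply]
    have hk : (V ω hpos hsum (fun _ => 0) : ∀ _ : Fin d → ℤ, ℂ) 0 = ((ω 0 : ℝ) : ℂ)⁻¹ := by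
      show ker ω (fun _ => 0) 0 = _
      simp [ker]
    rw [hk, map_inv₀, Complex.conj_ofReal, one_mul]
  have hne : torusFn ω u₀ (fun _ => 0) ≠ 0 := by
    rw [hval]
    exact inv_ne_zero (by exact_mod_cast (hpos 0).ne')
  have hle : (‖torusFn ω u₀ (fun _ => 0)‖₊ : ℝ≥0∞) ≤ initErr ω :=
    le_iSup_of_le u₀ (le_iSup_of_le hu (le_iSup_of_le (fun _ => 0)
      (le_iSup_of_le zero_mem_cube le_rfl)))
  refine lt_of_lt_of_le ?_ hle
  exact_mod_cast nnnorm_pos.2 hne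

lemma thr_pos (ω : (Fin d → ℤ) → ℝ) (hpos : ∀ k, 0 < ω k)
    (hsum : Summable fun k => ((ω k) ^ 2)⁻¹) (crit : Crit) {ε : ℝ} (hε : 0 < ε) :
    0 < ENNReal.ofReal ε * CRI ω crit := by
  cases crit with
  | ABS => simpa [CRI] using ENNReal.ofReal_pos.2 hε
  | NOR =>
    exact ENNReal.mul_pos (ENNReal.ofReal_pos.2 hε).ne'
      (initErr_pos ω hpos hsum).ne'

lemma setStd_nonempty (ω : (Fin d → ℤ) → ℝ) (hpos : ∀ k, 0 < ω k)
    (hsum : Summable fun k => ((ω k) ^ 2)⁻¹) (crit : Crit) {ε : ℝ} (hε : 0 < ε) :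
    {n : ℕ | wcErr ω (stdInfo ω) n ≤ ENNReal.ofReal ε * CRI ω crit}.Nonempty := by
  have hthr := thr_pos ω hpos hsum crit hε
  set r := min 1 (ENNReal.ofReal ε * CRI ω crit) with hr
  have hr0 : 0 < r := lt_min one_pos hthr
  have hrtop : r ≠ ⊤ := (lt_of_le_of_lt (min_le_left _ _) ENNReal.one_lt_top).ne
  have hδ : 0 < r.toReal := ENNReal.toReal_pos hr0.ne' hrtop
  obtain ⟨n, hn⟩ := exists_wcErr_le ω hpos hsum hδ
  refine ⟨n, hn.trans ?_⟩
  rw [ENNReal.ofReal_toReal hrtop]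
  exact min_le_right _ _

lemma infoComp_all_le (ω : (Fin d → ℤ) → ℝ) (hpos : ∀ k, 0 < ω k)
    (hsum : Summable fun k => ((ω k) ^ 2)⁻¹) (crit : Crit) {ε : ℝ} (hε : 0 < ε) :
    infoComp ω (allInfo d) crit ε ≤ infoComp ω (stdInfo ω) crit ε := by
  have hne := setStd_nonempty ω hpos hsum crit hε
  have hmem := Nat.sInf_mem hne
  refine Nat.sInf_le ?_
  exact le_trans (wcErr_anti (std_subset_all ω hpos hsum) ω _) hmem

lemma core_alg {c₂ : ℝ} (hc₂ : 1 < c₂) {ε : ℝ} (hε : ε ∈ Set.Ioo (0:ℝ) 1) :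
    1 + Real.log (ε / c₂)⁻¹ ≤ (1 + Real.log c₂) * (1 + Real.log ε⁻¹) := by
  obtain ⟨hε0, hε1⟩ := hε
  have hc0 : 0 < c₂ := lt_trans one_pos hc₂
  have hL : 0 < Real.log c₂ := Real.log_pos hc₂
  have ha : 0 ≤ Real.log ε⁻¹ := Real.log_nonneg (one_le_inv_iff₀.mpr ⟨hε0, hε1.le⟩)
  have hsplit : Real.log (ε / c₂)⁻¹ = Real.log c₂ + Real.log ε⁻¹ := by
    rw [inv_div, Real.log_div hc0.ne' hε0.ne', Real.log_inv]; ring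
  rw [hsplit]; nlinarith

lemma core_exp {c₂ : ℝ} (hc₂ : 1 < c₂) {ε : ℝ} (hε : ε ∈ Set.Ioo (0:ℝ) 1) :
    1 + Real.log (Real.log (ε / c₂)⁻¹ + 1) ≤
      (1 + Real.log (Real.log c₂ + 1)) * (1 + Real.log (Real.log ε⁻¹ + 1)) := by
  obtain ⟨hε0, hε1⟩ := hε
  have hc0 : 0 < c₂ := lt_trans one_pos hc₂
  have hL : 0 < Real.log c₂ := Real.log_pos hc₂
  have ha : 0 ≤ Real.log ε⁻¹ := Real.log_nonneg (one_le_inv_iff₀.mpr ⟨hε0, hε1.le⟩)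
  have hsplit : Real.log (ε / c₂)⁻¹ = Real.log c₂ + Real.log ε⁻¹ := by
    rw [inv_div, Real.log_div hc0.ne' hε0.ne', Real.log_inv]; ring
  set L := Real.log c₂
  set a := Real.log ε⁻¹
  have hml : (0:ℝ) < L + a + 1 := by nlinarith
  have hl1 : (0:ℝ) < L + 1 := by nlinarith
  have ha1' : (0:ℝ) < a + 1 := by nlinarith
  have hmr : L + a + 1 ≤ (L + 1) * (a + 1) := by nlinarith
  have h1 : Real.log (L + a + 1) ≤ Real.log (L + 1) + Real.log (a + 1) := by
    rw [← Real.log_mul hl1.ne' ha1'.ne']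
    exact Real.log_le_log hml hmr
  have hL1 : 0 ≤ Real.log (L + 1) := Real.log_nonneg (by nlinarith)
  have ha1 : 0 ≤ Real.log (a + 1) := Real.log_nonneg (by nlinarith)
  rw [hsplit]
  nlinarith [mul_nonneg hL1 ha1]

lemma sInf_pair {S T : Set ℝ} (κ : ℝ) (hκ : 0 < κ)
    (hS0 : ∀ s ∈ S, 0 ≤ s) (hT0 : ∀ t ∈ T, 0 ≤ t)
    (hsub : S ⊆ T) (hmap : ∀ t ∈ T, κ * t ∈ S) :
    sInf T ≤ sInf S ∧ sInf S ≤ κ * sInf T := by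
  rcases T.eq_empty_or_nonempty with hT | hT
  · have hSe : S = ∅ := Set.eq_empty_of_subset_empty (hT ▸ hsub)
    simp [hT, hSe, Real.sInf_empty]
  · have hSne : S.Nonempty := ⟨κ * hT.choose, hmap _ hT.choose_spec⟩
    have hbT : BddBelow T := ⟨0, hT0⟩
    have hbS : BddBelow S := ⟨0, hS0⟩
    refine ⟨csInf_le_csInf hbT hSne hsub, ?_⟩
    have h1 : ∀ t ∈ T, sInf S / κ ≤ t := by
      intro t ht
      rw [div_le_iff₀ hκ]
      calc sInf S ≤ κ * t := csInf_le hbS (hmap t ht)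
        _ = t * κ := mul_comm _ _
    have h2 := (div_le_iff₀ hκ).1 (le_csInf hT h1)
    calc sInf S ≤ sInf T * κ := h2
      _ = κ * sInf T := mul_comm _ _

end Stmt8Aux

/-- If `c₂ > 1`, `c₁ ∈ ℕ` are constants with
`n^⋆(ε, d; Λ^std) ≤ 2 c₁ n^⋆(ε / c₂, d; Λ^all)`, then the exponents of quasi-polynomial
tractability satisfy `EXP-t⋆(Λ^all) ≤ EXP-t⋆(Λ^std) ≤ (1 + ln(ln c₂ + 1)) EXP-t⋆(Λ^all)`
and `ALG-t⋆(Λ^all) ≤ ALG-t⋆(Λ^std) ≤ (1 + ln c₂) ALG-t⋆(Λ^all)`. -/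
theorem stmt8
    (ω : (d : ℕ) → (Fin d → ℤ) → ℝ)
    (hpos : ∀ d, 0 < d → ∀ k, 0 < ω d k)
    (hsum : ∀ d, 0 < d → Summable fun k => ((ω d k) ^ 2)⁻¹)
    (c₁ : ℕ) (hc₁ : 0 < c₁) (c₂ : ℝ) (hc₂ : 1 < c₂)
    (crit : Crit)
    (hmain : ∀ d : ℕ, 0 < d → ∀ ε ∈ Set.Ioo (0:ℝ) 1,
      infoComp (ω d) (stdInfo (ω d)) crit ε ≤
        2 * c₁ * infoComp (ω d) (allInfo d) crit (ε / c₂)) :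
    (EXPQPTexp (fun d ε => infoComp (ω d) (allInfo d) crit ε) ≤
        EXPQPTexp (fun d ε => infoComp (ω d) (stdInfo (ω d)) crit ε) ∧
      EXPQPTexp (fun d ε => infoComp (ω d) (stdInfo (ω d)) crit ε) ≤
        (1 + Real.log (Real.log c₂ + 1)) *
          EXPQPTexp (fun d ε => infoComp (ω d) (allInfo d) crit ε)) ∧
    (ALGQPTexp (fun d ε => infoComp (ω d) (allInfo d) crit ε) ≤
        ALGQPTexp (fun d ε => infoComp (ω d) (stdInfo (ω d)) crit ε) ∧
      ALGQPTexp (fun d ε => infoComp (ω d) (stdInfo (ω d)) crit ε) ≤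
        (1 + Real.log c₂) *
          ALGQPTexp (fun d ε => infoComp (ω d) (allInfo d) crit ε)) := by
  classical
  have hc0 : (0:ℝ) < c₂ := lt_trans one_pos hc₂
  have hεc : ∀ ε ∈ Set.Ioo (0:ℝ) 1, ε / c₂ ∈ Set.Ioo (0:ℝ) 1 := by
    rintro ε ⟨h0, h1⟩
    exact ⟨div_pos h0 hc0, (div_lt_one hc0).2 (lt_trans h1 hc₂)⟩
  have key : ∀ g : ℝ → ℝ, ∀ κ : ℝ, 0 < κ →
      (∀ ε ∈ Set.Ioo (0:ℝ) 1, 1 + g (ε / c₂) ≤ κ * (1 + g ε)) →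
      (sInf {t : ℝ | 0 ≤ t ∧ ∃ C > (0:ℝ), ∀ d : ℕ, 0 < d → ∀ ε ∈ Set.Ioo (0:ℝ) 1,
          (infoComp (ω d) (allInfo d) crit ε : ℝ) ≤
            C * Real.exp (t * (1 + Real.log d) * (1 + g ε))} ≤
        sInf {t : ℝ | 0 ≤ t ∧ ∃ C > (0:ℝ), ∀ d : ℕ, 0 < d → ∀ ε ∈ Set.Ioo (0:ℝ) 1,
          (infoComp (ω d) (stdInfo (ω d)) crit ε : ℝ) ≤
            C * Real.exp (t * (1 + Real.log d) * (1 + g ε))}) ∧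
      (sInf {t : ℝ | 0 ≤ t ∧ ∃ C > (0:ℝ), ∀ d : ℕ, 0 < d → ∀ ε ∈ Set.Ioo (0:ℝ) 1,
          (infoComp (ω d) (stdInfo (ω d)) crit ε : ℝ) ≤
            C * Real.exp (t * (1 + Real.log d) * (1 + g ε))} ≤
        κ * sInf {t : ℝ | 0 ≤ t ∧ ∃ C > (0:ℝ), ∀ d : ℕ, 0 < d → ∀ ε ∈ Set.Ioo (0:ℝ) 1,
          (infoComp (ω d) (allInfo d) crit ε : ℝ) ≤
            C * Real.exp (t * (1 + Real.log d) * (1 + g ε))}) := by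
    intro g κ hκ hcore
    refine Stmt8Aux.sInf_pair κ hκ (fun s hs => hs.1) (fun t ht => ht.1) ?_ ?_
    · rintro t ⟨ht0, C, hC, hbd⟩
      refine ⟨ht0, C, hC, fun d hd ε hε => ?_⟩
      refine le_trans ?_ (hbd d hd ε hε)
      exact Nat.cast_le.mpr
        (Stmt8Aux.infoComp_all_le (ω d) (hpos d hd) (hsum d hd) crit hε.1)
    · rintro t ⟨ht0, C, hC, hbd⟩
      have hc₁0 : (0:ℝ) < 2 * (c₁:ℝ) := by positivity
      refine ⟨mul_nonneg hκ.le ht0, 2 * (c₁:ℝ) * C, by positivity, fun d hd ε hε => ?_⟩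
      have hd1 : (0:ℝ) ≤ 1 + Real.log d := by
        have h1d : (1:ℝ) ≤ d := by exact_mod_cast hd
        have := Real.log_nonneg h1d
        linarith
      have h1 : (infoComp (ω d) (stdInfo (ω d)) crit ε : ℝ)
          ≤ 2 * (c₁:ℝ) * (infoComp (ω d) (allInfo d) crit (ε / c₂) : ℝ) := by
        exact_mod_cast hmain d hd ε hε
      have h2 := hbd d hd (ε / c₂) (hεc ε hε)
      have harg : t * (1 + Real.log d) * (1 + g (ε / c₂))
          ≤ κ * t * (1 + Real.log d) * (1 + g ε) := by
        calc t * (1 + Real.log d) * (1 + g (ε / c₂))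
            ≤ t * (1 + Real.log d) * (κ * (1 + g ε)) :=
              mul_le_mul_of_nonneg_left (hcore ε hε) (mul_nonneg ht0 hd1)
          _ = κ * t * (1 + Real.log d) * (1 + g ε) := by ring
      calc (infoComp (ω d) (stdInfo (ω d)) crit ε : ℝ)
          ≤ 2 * (c₁:ℝ) * (infoComp (ω d) (allInfo d) crit (ε / c₂) : ℝ) := h1
        _ ≤ 2 * (c₁:ℝ) * (C * Real.exp (t * (1 + Real.log d) * (1 + g (ε / c₂)))) :=
            mul_le_mul_of_nonneg_left h2 hc₁0.le
        _ ≤ 2 * (c₁:ℝ) * (C * Real.exp (κ * t * (1 + Real.log d) * (1 + g ε))) :=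
            mul_le_mul_of_nonneg_left
              (mul_le_mul_of_nonneg_left (Real.exp_le_exp.2 harg) hC.le) hc₁0.le
        _ = 2 * (c₁:ℝ) * C * Real.exp (κ * t * (1 + Real.log d) * (1 + g ε)) := by ring
  have hκA : (0:ℝ) < 1 + Real.log c₂ := by
    have := Real.log_pos hc₂; linarith
  have hκE : (0:ℝ) < 1 + Real.log (Real.log c₂ + 1) := by
    have h := Real.log_pos hc₂
    have := Real.log_nonneg (by linarith : (1:ℝ) ≤ Real.log c₂ + 1)
    linarith
  have hE := key (fun ε => Real.log (Real.log ε⁻¹ + 1)) (1 + Real.log (Real.log c₂ + 1)) hκE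
    (fun ε hε => Stmt8Aux.core_exp hc₂ hε)
  have hA := key (fun ε => Real.log ε⁻¹) (1 + Real.log c₂) hκA
    (fun ε hε => Stmt8Aux.core_alg hc₂ hε)
  exact ⟨⟨hE.1, hE.2⟩, hA.1, hA.2⟩
end
end

section
/- Let $P_m$ be the orthogonal projection $P_m(f) = \sum_{k=1}^m \langle f, e_{k,d} \rangle_{H(K_d)}\, e_{k,d}$. Then $\sup_{\|f\|_{H(K_d)} \leq 1} \|f - P_m f\|_{L_\infty(D_d)} \leq \sqrt{2 \sum_{k \geq \lfloor m/4 \rfloor} \frac{N_{\varrho_d}(4k)}{k}\, \sigma_{k,d}^2}$. -/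
open MeasureTheory
open scoped ENNReal NNReal ComplexConjugate

noncomputable section

/-- The function `f = ∑_k c_k e_k` of the reproducing kernel Hilbert space `H(K_d)`
determined by the orthonormal basis `{e_k}` (here `e j` is `e_{j+1}`) and the
coefficients `c ∈ ℓ²`, so that `‖f‖_{H(K_d)} = ‖c‖_{ℓ²}`. -/
def rkhsFn {d : ℕ} {D : Set (Fin d → ℝ)} (e : ℕ → D → ℂ) (c : ℕ → ℂ) (x : D) : ℂ :=
  ∑' j : ℕ, c j * e j x

/-- `f = ∑_k c_k e_k` lies in the unit ball of `H(K_d)`, i.e. `∑_k |c_k|² ≤ 1`. -/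
def unitBallCoeff (c : ℕ → ℂ) : Prop := ∀ F : Finset ℕ, ∑ j ∈ F, ‖c j‖ ^ 2 ≤ 1

/-- `N_{ϱ_d}(m) = sup_{x ∈ D} ∑_{k=1}^m |η_k(x)|²`, where `η_k = λ_k^{-1/2} e_k` are the
singular functions (here `e j`, `lam j` are `e_{j+1}`, `λ_{j+1}`). -/
def christ {d : ℕ} {D : Set (Fin d → ℝ)} (lam : ℕ → ℝ) (e : ℕ → D → ℂ) (m : ℕ) : ℝ≥0∞ :=
  ⨆ x : D, ∑ j ∈ Finset.range m, ENNReal.ofReal (‖e j x‖ ^ 2 / lam j)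

/-- The sampling numbers `g_n(I_{∞,d})`: the `n`-th minimal worst case error of
`L_∞`-approximation on the unit ball of `H(K_d)` using `n` function values. -/
def sampErr {d : ℕ} {D : Set (Fin d → ℝ)} (e : ℕ → D → ℂ) (n : ℕ) : ℝ≥0∞ :=
  ⨅ (pts : Fin n → D) (φ : (Fin n → ℂ) → D → ℂ),
    ⨆ (c : ℕ → ℂ) (_ : unitBallCoeff c) (x : D),
      (‖rkhsFn e c x - φ (fun i => rkhsFn e c (pts i)) x‖₊ : ℝ≥0∞)

lemma stmt11_core {d : ℕ} {D : Set (Fin d → ℝ)} (lam : ℕ → ℝ) (e : ℕ → D → ℂ)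
    (hlam : ∀ j, 0 < lam j) (hmono : Antitone lam) (m : ℕ) (x : D) :
    ∑' p : ℕ, (if p < m then 0 else ENNReal.ofReal (‖e p x‖ ^ 2)) ≤
      2 * ∑' j : ℕ, christ lam e (4 * (max (m / 4) 1 + j)) *
        ENNReal.ofReal (lam (max (m / 4) 1 + j - 1)) /
        ((max (m / 4) 1 + j : ℕ) : ℝ≥0∞) := by
  set K₁ := max (m / 4) 1 with hK₁
  set h : ℕ → ℝ≥0∞ := fun p => ENNReal.ofReal (‖e p x‖ ^ 2 / lam p) with hh
  set F : ℕ → ℕ → ℝ≥0∞ := fun p k =>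
    if k ≤ p + 1 ∧ p + 1 ≤ 2 * k ∧ m ≤ p then
      2 / ((p : ℝ≥0∞) + 1) * (ENNReal.ofReal (lam (k - 1)) * h p) else 0 with hF
  set G : ℕ → ℝ≥0∞ := fun k =>
    if K₁ ≤ k then 2 / (k : ℝ≥0∞) * (ENNReal.ofReal (lam (k - 1)) * christ lam e (4 * k))
    else 0 with hG
  have hlamh : ∀ p, ENNReal.ofReal (lam p) * h p = ENNReal.ofReal (‖e p x‖ ^ 2) := by
    intro p
    rw [hh, ← ENNReal.ofReal_mul (hlam p).le, mul_div_cancel₀ _ (hlam p).ne']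
  have step1 : ∀ p, (if p < m then 0 else ENNReal.ofReal (‖e p x‖ ^ 2)) ≤ ∑' k, F p k := by
    intro p
    split
    · exact zero_le
    · rename_i hpm
      push_neg at hpm
      set s : Finset ℕ := Finset.Icc ((p + 2) / 2) (p + 1) with hs
      have hcard : s.card = p + 1 + 1 - (p + 2) / 2 := by
        rw [hs, Nat.card_Icc]
      have hne : ((p : ℝ≥0∞) + 1) ≠ 0 := by simp
      have hnt : ((p : ℝ≥0∞) + 1) ≠ ∞ := by
        exact ENNReal.add_ne_top.2 ⟨ENNReal.natCast_ne_top p, ENNReal.one_ne_top⟩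
      have h1 : (1 : ℝ≥0∞) ≤ (s.card : ℝ≥0∞) * (2 / ((p : ℝ≥0∞) + 1)) := by
        have h2 : ((p : ℝ≥0∞) + 1) ≤ (s.card : ℝ≥0∞) * 2 := by
          have : ((p + 1 : ℕ) : ℝ≥0∞) ≤ ((s.card * 2 : ℕ) : ℝ≥0∞) :=
            Nat.cast_le.2 (by omega)
          push_cast at this
          convert this using 2 <;> simp
        calc (1 : ℝ≥0∞) = ((p : ℝ≥0∞) + 1) / ((p : ℝ≥0∞) + 1) :=
              (ENNReal.div_self hne hnt).symm
          _ ≤ ((s.card : ℝ≥0∞) * 2) / ((p : ℝ≥0∞) + 1) := ENNReal.div_le_div_right h2 _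
          _ = (s.card : ℝ≥0∞) * (2 / ((p : ℝ≥0∞) + 1)) := by rw [mul_div_assoc]
      have hterm : ∀ k ∈ s,
          2 / ((p : ℝ≥0∞) + 1) * ENNReal.ofReal (‖e p x‖ ^ 2) ≤ F p k := by
        intro k hk
        rw [hs, Finset.mem_Icc] at hk
        have hcond : k ≤ p + 1 ∧ p + 1 ≤ 2 * k ∧ m ≤ p := ⟨hk.2, by omega, hpm⟩
        simp only [hF]
        rw [if_pos hcond, ← hlamh p]
        gcongr
        exact hmono (by omega : k - 1 ≤ p)
      calc ENNReal.ofReal (‖e p x‖ ^ 2)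
          = 1 * ENNReal.ofReal (‖e p x‖ ^ 2) := (one_mul _).symm
        _ ≤ ((s.card : ℝ≥0∞) * (2 / ((p : ℝ≥0∞) + 1))) * ENNReal.ofReal (‖e p x‖ ^ 2) := by
            gcongr
        _ = ∑ _k ∈ s, 2 / ((p : ℝ≥0∞) + 1) * ENNReal.ofReal (‖e p x‖ ^ 2) := by
            rw [Finset.sum_const, nsmul_eq_mul, mul_assoc]
        _ ≤ ∑ k ∈ s, F p k := Finset.sum_le_sum hterm
        _ ≤ ∑' k, F p k := ENNReal.sum_le_tsum s
  have step3 : ∀ k, ∑' p, F p k ≤ G k := by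
    intro k
    by_cases hk : K₁ ≤ k
    · have hk1 : 1 ≤ k := le_trans (le_max_right _ _) hk
      have hfin : ∀ p ∉ Finset.range (2 * k), F p k = 0 := by
        intro p hp
        rw [Finset.mem_range, not_lt] at hp
        simp only [hF]
        refine if_neg ?_
        rintro ⟨h1', h2', h3'⟩; omega
      rw [tsum_eq_sum hfin]
      have hterm : ∀ p ∈ Finset.range (2 * k),
          F p k ≤ 2 / (k : ℝ≥0∞) * (ENNReal.ofReal (lam (k - 1)) * h p) := by
        intro p _
        simp only [hF]
        split
        · rename_i hcond
          gcongr
          exact_mod_cast Nat.cast_le.2 hcond.1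
        · exact zero_le
      calc ∑ p ∈ Finset.range (2 * k), F p k
          ≤ ∑ p ∈ Finset.range (2 * k),
              2 / (k : ℝ≥0∞) * (ENNReal.ofReal (lam (k - 1)) * h p) :=
            Finset.sum_le_sum hterm
        _ = 2 / (k : ℝ≥0∞) * (ENNReal.ofReal (lam (k - 1)) *
              ∑ p ∈ Finset.range (2 * k), h p) := by
            rw [Finset.mul_sum, Finset.mul_sum]
        _ ≤ 2 / (k : ℝ≥0∞) * (ENNReal.ofReal (lam (k - 1)) * christ lam e (4 * k)) := by
            gcongr
            calc ∑ p ∈ Finset.range (2 * k), h p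
                ≤ ∑ p ∈ Finset.range (4 * k), h p :=
                  Finset.sum_le_sum_of_subset (Finset.range_subset_range.2 (by omega))
              _ ≤ christ lam e (4 * k) := le_iSup
                  (fun y : D => ∑ j ∈ Finset.range (4 * k),
                    ENNReal.ofReal (‖e j y‖ ^ 2 / lam j)) x
        _ = G k := by simp only [hG]; rw [if_pos hk]
    · have hz : ∀ p, F p k = 0 := by
        intro p
        simp only [hF]
        refine if_neg ?_
        rintro ⟨h1', h2', h3'⟩
        rw [hK₁] at hk
        omega
      simp only [hG]
      rw [if_neg hk]
      simp [hz]
  have hGzero : ∀ k, k < K₁ → G k = 0 := fun k hk => by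
    simp only [hG]; rw [if_neg (not_le.2 hk)]
  calc ∑' p : ℕ, (if p < m then 0 else ENNReal.ofReal (‖e p x‖ ^ 2))
      ≤ ∑' p, ∑' k, F p k := ENNReal.tsum_le_tsum step1
    _ = ∑' k, ∑' p, F p k := ENNReal.tsum_comm
    _ ≤ ∑' k, G k := ENNReal.tsum_le_tsum step3
    _ = ∑' j, G (K₁ + j) := by
        refine (Function.Injective.tsum_eq (g := fun j => K₁ + j)
          (fun a b hab => by simp only [] at hab; omega) ?_).symm
        intro y hy
        rcases lt_or_ge y K₁ with h' | h'
        · exact absurd (hGzero y h') hy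
        · exact ⟨y - K₁, by simp only []; omega⟩
    _ = 2 * ∑' j : ℕ, christ lam e (4 * (K₁ + j)) *
        ENNReal.ofReal (lam (K₁ + j - 1)) / ((K₁ + j : ℕ) : ℝ≥0∞) := by
        rw [← ENNReal.tsum_mul_left]
        refine tsum_congr fun j => ?_
        simp only [hG]
        rw [if_pos (Nat.le_add_right _ _), div_eq_mul_inv, div_eq_mul_inv]
        push_cast
        ring

lemma stmt11_outer {d : ℕ} {D : Set (Fin d → ℝ)} (K : D → D → ℂ)
    (e : ℕ → D → ℂ)
    (hrepr : ∀ x y : D, HasSum (fun j => e j x * conj (e j y)) (K x y))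
    (c : ℕ → ℂ) (hc : unitBallCoeff c) (m : ℕ) (x : D) :
    ‖rkhsFn e c x - rkhsFn e (fun j => if j < m then c j else 0) x‖ ≤
      Real.sqrt (∑' j : ℕ, (if j < m then 0 else ‖e j x‖ ^ 2)) := by
  -- summability of ‖e j x‖²
  have he2 : HasSum (fun j => ‖e j x‖ ^ 2) ((K x x).re) := by
    have h1 : ∀ j : ℕ, e j x * conj (e j x) = ((‖e j x‖ ^ 2 : ℝ) : ℂ) := by
      intro j
      rw [Complex.mul_conj]; norm_cast
      rw [Complex.normSq_eq_norm_sq]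
    have h2 := hrepr x x
    simp only [h1] at h2
    have h3 := ((Complex.hasSum_iff _ _).1 h2).1
    simp only [Complex.ofReal_re] at h3
    exact h3
  have he2nn : ∀ j : ℕ, (0:ℝ) ≤ ‖e j x‖ ^ 2 := fun j => sq_nonneg _
  have hc2 : Summable (fun j => ‖c j‖ ^ 2) :=
    summable_of_sum_range_le (fun j => sq_nonneg _) (fun n => (show ∀ F : Finset ℕ, ∑ j ∈ F, ‖c j‖ ^ 2 ≤ 1 from hc) (Finset.range n))
  -- w and its summability
  set w : ℕ → ℝ := fun j => if j < m then 0 else ‖e j x‖ ^ 2 with hw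
  have hwnn : ∀ j, 0 ≤ w j := by
    intro j; simp only [hw]; split
    · exact le_refl 0
    · exact sq_nonneg _
  have hwle : ∀ j, w j ≤ ‖e j x‖ ^ 2 := by
    intro j; simp only [hw]; split
    · exact sq_nonneg _
    · exact le_refl _
  have hwsum : Summable w := Summable.of_nonneg_of_le hwnn hwle he2.summable
  set Tx : ℝ := ∑' j, w j with hTx
  have hTxnn : 0 ≤ Tx := tsum_nonneg hwnn
  -- the coefficient of the difference
  set b : ℕ → ℂ := fun j => if j < m then 0 else c j with hb
  -- summability of the series
  have habs : ∀ (a : ℕ → ℂ), (∀ j, ‖a j‖ ≤ ‖c j‖) → Summable (fun j => a j * e j x) := by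
    intro a ha
    refine Summable.of_norm (Summable.of_nonneg_of_le (fun j => norm_nonneg _) ?_
      ((hc2.add he2.summable).div_const 2))
    intro j
    rw [norm_mul]
    calc ‖a j‖ * ‖e j x‖ ≤ ‖c j‖ * ‖e j x‖ :=
          mul_le_mul_of_nonneg_right (ha j) (norm_nonneg _)
      _ ≤ (‖c j‖ ^ 2 + ‖e j x‖ ^ 2) / 2 := by
          nlinarith [sq_nonneg (‖c j‖ - ‖e j x‖)]
  have hsum1 : Summable (fun j => c j * e j x) := habs c (fun j => le_refl _)
  have hsum2 : Summable (fun j => (if j < m then c j else 0) * e j x) := by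
    refine habs _ fun j => ?_
    split
    · exact le_refl _
    · simp
  -- the difference equals the tsum of b j * e j x
  have hdiff : rkhsFn e c x - rkhsFn e (fun j => if j < m then c j else 0) x =
      ∑' j, b j * e j x := by
    rw [rkhsFn, rkhsFn, ← Summable.tsum_sub hsum1 hsum2]
    refine tsum_congr fun j => ?_
    simp only [hb]
    split <;> ring
  rw [hdiff]
  -- Cauchy–Schwarz on finite sums
  have hkey : ∀ F : Finset ℕ, ∑ j ∈ F, ‖b j * e j x‖ ≤ Real.sqrt Tx := by
    intro F
    have hbsq : ∑ j ∈ F, ‖b j‖ ^ 2 ≤ 1 := by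
      refine le_trans (Finset.sum_le_sum fun j _ => ?_) ((show ∀ F : Finset ℕ, ∑ j ∈ F, ‖c j‖ ^ 2 ≤ 1 from hc) F)
      simp only [hb]
      split
      · refine le_trans (le_of_eq (by simp)) (sq_nonneg _)
      · exact le_refl _
    have hwsq : ∑ j ∈ F, w j ≤ Tx := Summable.sum_le_tsum F (fun j _ => hwnn j) hwsum
    have hbridge : ∀ j, ‖b j * e j x‖ = ‖b j‖ * Real.sqrt (w j) := by
      intro j
      rw [norm_mul]
      simp only [hb, hw]
      split
      · simp
      · rw [Real.sqrt_sq (norm_nonneg _)]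
    calc ∑ j ∈ F, ‖b j * e j x‖ = ∑ j ∈ F, ‖b j‖ * Real.sqrt (w j) := by
          exact Finset.sum_congr rfl fun j _ => hbridge j
      _ ≤ Real.sqrt (∑ j ∈ F, ‖b j‖ ^ 2) * Real.sqrt (∑ j ∈ F, w j) := by
          rw [← Real.sqrt_mul (Finset.sum_nonneg fun j _ => sq_nonneg _)]
          refine Real.le_sqrt_of_sq_le ?_
          have h2 := Finset.sum_mul_sq_le_sq_mul_sq F (fun j => ‖b j‖)
            (fun j => Real.sqrt (w j))
          simp only [Real.sq_sqrt (hwnn _)] at h2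
          exact h2
      _ ≤ Real.sqrt 1 * Real.sqrt Tx := by
          gcongr <;> first
            | exact Finset.sum_nonneg fun j _ => sq_nonneg _
            | exact hbsq
            | exact hwsq
      _ = Real.sqrt Tx := by rw [Real.sqrt_one, one_mul]
  have hnormsum : Summable (fun j => ‖b j * e j x‖) := by
    exact summable_of_sum_range_le (fun j => norm_nonneg _) fun n => hkey (Finset.range n)
  calc ‖∑' j, b j * e j x‖ ≤ ∑' j, ‖b j * e j x‖ := norm_tsum_le_tsum_norm hnormsum
    _ ≤ Real.sqrt Tx := Summable.tsum_le_of_sum_range_le hnormsum fun n => hkey (Finset.range n)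


lemma stmt11_esum {d : ℕ} {D : Set (Fin d → ℝ)} (K : D → D → ℂ)
    (e : ℕ → D → ℂ)
    (hrepr : ∀ x y : D, HasSum (fun j => e j x * conj (e j y)) (K x y))
    (x : D) : Summable (fun j => ‖e j x‖ ^ 2) := by
  have h1 : ∀ j : ℕ, e j x * conj (e j x) = ((‖e j x‖ ^ 2 : ℝ) : ℂ) := by
    intro j
    rw [Complex.mul_conj]; norm_cast
    rw [Complex.normSq_eq_norm_sq]
  have h2 := hrepr x x
  simp only [h1] at h2
  have h3 := ((Complex.hasSum_iff _ _).1 h2).1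
  simp only [Complex.ofReal_re] at h3
  exact h3.summable

/-- With `P_m f = ∑_{k=1}^m ⟨f, e_k⟩_{H(K_d)} e_k` the orthogonal
projection (acting on coefficients as truncation to `k ≤ m`),
`sup_{‖f‖_{H(K_d)} ≤ 1} ‖f - P_m f‖_∞ ≤ √(2 ∑_{k ≥ ⌊m/4⌋} N_ϱ(4k) σ_k² / k)`
(sum over positive integers `k`, written via `K₁ = max(⌊m/4⌋, 1)`). -/
theorem stmt11
    (d : ℕ) (hd : 0 < d)
    (D : Set (Fin d → ℝ)) (hDc : IsCompact D) (hDne : D.Nonempty)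
    (μ : Measure D) [IsProbabilityMeasure μ]
    (hfull : ∀ U : Set D, IsOpen U → U.Nonempty → 0 < μ U)
    (K : D → D → ℂ) (hKcont : Continuous (fun p : D × D => K p.1 p.2))
    (lam : ℕ → ℝ) (e : ℕ → D → ℂ)
    (hlam : ∀ j, 0 < lam j) (hmono : Antitone lam) (hecont : ∀ j, Continuous (e j))
    (hrepr : ∀ x y : D, HasSum (fun j => e j x * conj (e j y)) (K x y))
    (hbd : ∃ B : ℝ, ∀ x : D, ‖K x x‖ ≤ B)
    (horth : ∀ j l : ℕ, ∫ x, e j x * conj (e l x) ∂μ = if j = l then (lam j : ℂ) else 0)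
    (m : ℕ) (hm : 0 < m) :
    (⨆ (c : ℕ → ℂ) (_ : unitBallCoeff c) (x : D),
        (‖rkhsFn e c x - rkhsFn e (fun j => if j < m then c j else 0) x‖₊ : ℝ≥0∞)) ≤
      (2 * ∑' j : ℕ, christ lam e (4 * (max (m / 4) 1 + j)) *
        ENNReal.ofReal (lam (max (m / 4) 1 + j - 1)) /
        ((max (m / 4) 1 + j : ℕ) : ℝ≥0∞)) ^ (1 / 2 : ℝ) := by
  refine iSup_le fun c => iSup_le fun hc => iSup_le fun x => ?_
  set w : ℕ → ℝ := fun j => if j < m then 0 else ‖e j x‖ ^ 2 with hw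
  have hwnn : ∀ j, 0 ≤ w j := by
    intro j; simp only [hw]; split
    · exact le_refl 0
    · exact sq_nonneg _
  have hwle : ∀ j, w j ≤ ‖e j x‖ ^ 2 := by
    intro j; simp only [hw]; split
    · exact sq_nonneg _
    · exact le_refl _
  have hwsum : Summable w :=
    Summable.of_nonneg_of_le hwnn hwle (stmt11_esum K e hrepr x)
  have hTxnn : (0:ℝ) ≤ ∑' j, w j := tsum_nonneg hwnn
  have keyA := stmt11_outer K e hrepr c hc m x
  rw [← enorm_eq_nnnorm, ← ofReal_norm]
  calc ENNReal.ofReal ‖rkhsFn e c x - rkhsFn e (fun j => if j < m then c j else 0) x‖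
      ≤ ENNReal.ofReal (Real.sqrt (∑' j, w j)) := ENNReal.ofReal_le_ofReal keyA
    _ = (ENNReal.ofReal (∑' j, w j)) ^ (1/2 : ℝ) := by
        rw [Real.sqrt_eq_rpow, ENNReal.ofReal_rpow_of_nonneg hTxnn (by norm_num)]
    _ ≤ (2 * ∑' j : ℕ, christ lam e (4 * (max (m / 4) 1 + j)) *
          ENNReal.ofReal (lam (max (m / 4) 1 + j - 1)) /
          ((max (m / 4) 1 + j : ℕ) : ℝ≥0∞)) ^ (1 / 2 : ℝ) := by
        refine ENNReal.rpow_le_rpow ?_ (by norm_num)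
        have heq : ENNReal.ofReal (∑' j, w j) =
            ∑' p : ℕ, (if p < m then 0 else ENNReal.ofReal (‖e p x‖ ^ 2)) := by
          rw [ENNReal.ofReal_tsum_of_nonneg hwnn hwsum]
          refine tsum_congr fun j => ?_
          simp only [hw]
          split
          · simp
          · rfl
        rw [heq]
        exact stmt11_core lam e hlam hmono m x
end
end
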